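/- Let x, y, z be complex numbers with |x| < 1, |y| < 1, x ≠ 0 or y ≠ 0, and suppose |z| ≤ (1 + max(|x|,|y|)) / (2 * max(|x|,|y|)). Let p = x * conj(y). Then |1 - p| ≤ 2 * |1 - |z|^2 * p|. -/

import Mathlib

theorem stmt2 (x y z : ℂ) (hx : ‖x‖ < 1) (hy : ‖y‖ < 1)
    (hxy : x ≠ 0 ∨ y ≠ 0)
    (hz : ‖z‖ ≤
      (1 + max ‖x‖ ‖y‖) / (2 * max ‖x‖ ‖y‖)) :
    ‖1 - x * (starRingEnd ℂ) y‖ ≤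
      2 * ‖1 - ((‖z‖ : ℂ))^2 * (x * (starRingEnd ℂ) y)‖ := by
  set p : ℂ := x * (starRingEnd ℂ) y with hp
  set t : ℝ := ‖z‖^2 with ht
  have ht0 : 0 ≤ t := sq_nonneg _
  set m : ℝ := max ‖x‖ ‖y‖ with hm
  have hm1 : m < 1 := max_lt hx hy
  have hm0 : 0 < m := by
    rcases hxy with h | h
    · exact lt_max_of_lt_left (norm_pos_iff.mpr h)
    · exact lt_max_of_lt_right (norm_pos_iff.mpr h)
  have hap : ‖p‖ ≤ m^2 := by
    rw [hp, norm_mul, Complex.norm_conj]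
    have h1 : ‖x‖ ≤ m := le_max_left _ _
    have h2 : ‖y‖ ≤ m := le_max_right _ _
    nlinarith [norm_nonneg x, norm_nonneg y]
  have hp0 : 0 ≤ ‖p‖ := norm_nonneg p
  have htb : t * (4 * m^2) ≤ (1+m)^2 := by
    have h := pow_le_pow_left₀ (norm_nonneg z) hz 2
    rw [← ht, div_pow] at h
    have h2m : (0:ℝ) < (2*m)^2 := by positivity
    have h' := (le_div_iff₀ h2m).mp h
    nlinarith [h']
  have key : |t-1| * ‖p‖ + t * ‖p‖ ≤ 1 := by
    rcases le_or_gt t 1 with h | h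
    · have habs : |t-1| = 1 - t := by rw [abs_sub_comm]; exact abs_of_nonneg (by linarith)
      rw [habs]; nlinarith
    · have habs : |t-1| = t - 1 := abs_of_nonneg (by linarith)
      rw [habs]
      have hprod : (0:ℝ) ≤ (2*t-1) * (m^2 - ‖p‖) :=
        mul_nonneg (by linarith) (by linarith)
      nlinarith [sq_nonneg (1-m)]
  -- rewrite the cast
  have hcast : ((‖z‖ : ℂ))^2 = ((t:ℝ) : ℂ) := by rw [ht]; push_cast; ring
  rw [hcast]
  have habs_tp : ‖(t:ℂ) * p‖ = t * ‖p‖ := by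
    rw [norm_mul, Complex.norm_real, Real.norm_eq_abs, abs_of_nonneg ht0]
  have tri2 : 1 - t * ‖p‖ ≤ ‖1 - (t:ℂ)*p‖ := by
    have := norm_add_le (1 - (t:ℂ)*p) ((t:ℂ)*p)
    simp only [sub_add_cancel, norm_one] at this
    rw [habs_tp] at this
    linarith
  have tri1 : ‖1-p‖ ≤ ‖1 - (t:ℂ)*p‖ + |t-1| * ‖p‖ := by
    have heq : (1:ℂ) - p = (1 - (t:ℂ)*p) + ((t:ℂ)-1)*p := by ring
    rw [heq]
    refine (norm_add_le _ _).trans ?_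
    have : ‖((t:ℂ)-1)*p‖ = |t-1| * ‖p‖ := by
      rw [norm_mul]
      congr 1
      rw [show ((t:ℂ)-1) = (((t-1:ℝ)):ℂ) by push_cast; ring, Complex.norm_real, Real.norm_eq_abs]
    rw [this]
  linarith
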